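/- (Elimination lemma, non-strict-free version.) Let P ∈ 𝕊^l, W ∈ ℝ^{l×k}, U ∈ ℝ^{l×m}, V ∈ ℝ^{n×k}, and let V_⊥ be a basis matrix of ker(V). Then there exists K ∈ ℝ^{m×n} with (W + U K V)ᵀ P (W + U K V) ≺ 0 if and only if (W V_⊥)ᵀ P (W V_⊥) ≺ 0 and the symmetric matrix [W, U]ᵀ P [W, U] has at least k negative eigenvalues. -/

import Mathlib

open Matrix Module LinearMap

section MatrixAux
variable {l : ℕ} {ι : Type*} [Fintype ι]

lemma quad_eq (P : Matrix (Fin l) (Fin l) ℝ) (A : Matrix (Fin l) ι ℝ) (v : ι → ℝ) :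
    v ⬝ᵥ (Aᵀ * P * A) *ᵥ v = (A *ᵥ v) ⬝ᵥ P *ᵥ (A *ᵥ v) := by
  rw [← mulVec_mulVec, ← mulVec_mulVec, dotProduct_mulVec, vecMul_transpose]

lemma herm_neg (P : Matrix (Fin l) (Fin l) ℝ) (hP : P.IsSymm) (A : Matrix (Fin l) ι ℝ) :
    (-(Aᵀ * P * A)).IsHermitian := by
  have h : (Aᵀ * P * A)ᵀ = Aᵀ * P * A := by
    rw [transpose_mul, transpose_mul, transpose_transpose, hP.eq, Matrix.mul_assoc]
  have : (-(Aᵀ * P * A))ᴴ = (-(Aᵀ * P * A))ᵀ := by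
    simp [conjTranspose_eq_transpose_of_trivial]
  rw [Matrix.IsHermitian, this, transpose_neg, h]

lemma neg_quad_of_posDef {κ : ℕ} (P : Matrix (Fin l) (Fin l) ℝ) (A : Matrix (Fin l) (Fin κ) ℝ)
    (h : (-(Aᵀ * P * A)).PosDef) (x : Fin κ → ℝ) (hx : x ≠ 0) :
    (A *ᵥ x) ⬝ᵥ P *ᵥ (A *ᵥ x) < 0 := by
  have h2 := h.dotProduct_mulVec_pos hx
  rw [star_trivial, neg_mulVec, dotProduct_neg] at h2
  rw [← quad_eq P A x]
  linarith

lemma posDef_neg_of {κ : ℕ} (P : Matrix (Fin l) (Fin l) ℝ) (hP : P.IsSymm)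
    (A : Matrix (Fin l) (Fin κ) ℝ)
    (h : ∀ x : Fin κ → ℝ, x ≠ 0 → (A *ᵥ x) ⬝ᵥ P *ᵥ (A *ᵥ x) < 0) :
    (-(Aᵀ * P * A)).PosDef := by
  refine Matrix.PosDef.of_dotProduct_mulVec_pos (herm_neg P hP A) (fun x hx => ?_)
  rw [star_trivial, neg_mulVec, dotProduct_neg]
  have := h x hx
  rw [← quad_eq P A x] at this
  linarith

end MatrixAux

section Core
variable {ι : Type*} [Fintype ι] [DecidableEq ι]

lemma dot_symm (S : Matrix ι ι ℝ) (hS : S.IsSymm) (u v : ι → ℝ) :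
    u ⬝ᵥ S *ᵥ v = v ⬝ᵥ S *ᵥ u := by
  rw [dotProduct_mulVec, ← mulVec_transpose, hS, dotProduct_comm]

lemma quad_expand (S : Matrix ι ι ℝ) (hS : S.IsSymm) (u v : ι → ℝ) (c : ℝ) :
    (u + c • v) ⬝ᵥ S *ᵥ (u + c • v) =
      u ⬝ᵥ S *ᵥ u + 2 * c * (u ⬝ᵥ S *ᵥ v) + c ^ 2 * (v ⬝ᵥ S *ᵥ v) := by
  rw [mulVec_add, mulVec_smul, add_dotProduct, smul_dotProduct, dotProduct_add, dotProduct_add,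
    dotProduct_smul, dotProduct_smul, dot_symm S hS v u]
  simp [smul_eq_mul]
  ring

lemma exists_eps (a b c : ℝ) (hc : c < 0) :
    ∃ ε : ℝ, 0 < ε ∧ c + 2 * ε * b + ε ^ 2 * a < 0 := by
  obtain ⟨D, hD⟩ : ∃ D : ℝ, D = 1 + 2 * |b| + |a| - c := ⟨_, rfl⟩
  have hbn := abs_nonneg b
  have han := abs_nonneg a
  have hDpos : 0 < D := by linarith
  obtain ⟨ε, hε⟩ : ∃ ε : ℝ, ε = -c / (2 * D) := ⟨_, rfl⟩
  have hεpos : 0 < ε := by rw [hε]; apply div_pos <;> linarith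
  have hε1 : ε ≤ 1 := by rw [hε, div_le_one (by linarith)]; linarith
  refine ⟨ε, hεpos, ?_⟩
  have h1 : 2 * ε * b ≤ 2 * ε * |b| := by nlinarith [le_abs_self b]
  have h2 : ε ^ 2 * a ≤ ε * |a| := by
    have e2 : ε ^ 2 ≤ ε := by nlinarith
    have e3 : ε ^ 2 * a ≤ ε ^ 2 * |a| := by nlinarith [le_abs_self a, sq_nonneg ε]
    have e4 : ε ^ 2 * |a| ≤ ε * |a| := by nlinarith
    linarith
  have h3 : ε * (2 * |b| + |a|) ≤ ε * D := by nlinarith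
  have h4 : ε * D = -c / 2 := by rw [hε]; field_simp
  have h5 : ε * (2 * |b| + |a|) = 2 * ε * |b| + ε * |a| := by ring
  linarith

/-- Escape a proper subspace while staying in the negative cone. -/
lemma escape (S : Matrix ι ι ℝ) (hS : S.IsSymm) (T : Submodule ℝ (ι → ℝ))
    (w₀ u : ι → ℝ) (hw₀ : w₀ ⬝ᵥ S *ᵥ w₀ < 0) (hu : u ∉ T) :
    ∃ ε : ℝ, (w₀ + ε • u) ⬝ᵥ S *ᵥ (w₀ + ε • u) < 0 ∧ (w₀ + ε • u) ∉ T := by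
  by_cases hw : w₀ ∈ T
  · obtain ⟨ε, hεpos, hneg⟩ :=
      exists_eps (u ⬝ᵥ S *ᵥ u) (w₀ ⬝ᵥ S *ᵥ u) (w₀ ⬝ᵥ S *ᵥ w₀) hw₀
    refine ⟨ε, ?_, ?_⟩
    · rw [quad_expand S hS]; linarith
    · intro hmem
      have : ε • u ∈ T := by
        have := T.sub_mem hmem hw
        simpa using this
      exact hu ((Submodule.smul_mem_iff T (ne_of_gt hεpos)).mp this)
  · exact ⟨0, by simpa using hw₀, by simpa using hw⟩


open LinearMap.BilinForm in
/-- Core extension: grow a negative-definite subspace avoiding `E` up to dimension `k`. -/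
lemma extend_neg (S : Matrix ι ι ℝ) (hS : S.IsSymm) (E N : Submodule ℝ (ι → ℝ)) (k : ℕ)
    (hN : ∀ v ∈ N, v ≠ 0 → v ⬝ᵥ S *ᵥ v < 0) (hNk : k ≤ finrank ℝ N)
    (hEk : finrank ℝ E + k ≤ Fintype.card ι) :
    ∀ d (M : Submodule ℝ (ι → ℝ)), (∀ v ∈ M, v ≠ 0 → v ⬝ᵥ S *ᵥ v < 0) →
      M ⊓ E = ⊥ → finrank ℝ M + d = k →
      ∃ M' : Submodule ℝ (ι → ℝ), M ≤ M' ∧ (∀ v ∈ M', v ≠ 0 → v ⬝ᵥ S *ᵥ v < 0) ∧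
        M' ⊓ E = ⊥ ∧ finrank ℝ M' = k := by
  have hcard : finrank ℝ (ι → ℝ) = Fintype.card ι := Module.finrank_fintype_fun_eq_card ℝ
  set B : LinearMap.BilinForm ℝ (ι → ℝ) := Matrix.toBilin' S with hB
  have hBapp : ∀ u v : ι → ℝ, B u v = u ⬝ᵥ S *ᵥ v := fun u v => Matrix.toBilin'_apply' S u v
  have hBrefl : B.IsRefl := by
    intro x y h
    rw [hBapp] at h ⊢
    rw [dot_symm S hS]; exact h
  intro d
  induction d with
  | zero =>
    intro M hM hME hd
    exact ⟨M, le_refl M, hM, hME, by omega⟩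
  | succ d ih =>
    intro M hM hME hd
    -- the orthogonal complement of M
    set O : Submodule ℝ (ι → ℝ) := B.orthogonal M with hO
    have hMO : M ⊓ O = ⊥ := by
      rw [Submodule.eq_bot_iff]
      rintro v ⟨hv1, hv2⟩
      by_contra hne
      have := hM v hv1 hne
      have h0 : B v v = 0 := hv2 v hv1
      rw [hBapp] at h0
      linarith
    have hOfin : finrank ℝ M + finrank ℝ O = Fintype.card ι
        + finrank ℝ (M ⊓ B.orthogonal ⊤ : Submodule ℝ (ι → ℝ)) := by
      rw [← hcard]
      exact finrank_add_finrank_orthogonal hBrefl M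
    have hOge : Fintype.card ι ≤ finrank ℝ M + finrank ℝ O := by omega
    have hMOsup : M ⊔ O = ⊤ := by
      apply Submodule.eq_top_of_finrank_eq
      have h1 := Submodule.finrank_sup_add_finrank_inf_eq M O
      rw [hMO, finrank_bot, add_zero] at h1
      have h2 : finrank ℝ ↥(M ⊔ O) ≤ finrank ℝ (ι → ℝ) := Submodule.finrank_le _
      omega
    -- find a nonzero negative vector in N ⊓ O
    have hNOpos : 0 < finrank ℝ ↥(N ⊓ O) := by
      have h1 := Submodule.finrank_sup_add_finrank_inf_eq N O
      have h2 : finrank ℝ ↥(N ⊔ O) ≤ finrank ℝ (ι → ℝ) := Submodule.finrank_le _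
      have h3 : finrank ℝ M ≤ finrank ℝ (ι → ℝ) := Submodule.finrank_le _
      omega
    have hNObot : (N ⊓ O) ≠ ⊥ := by
      intro h
      rw [h, finrank_bot] at hNOpos
      omega
    obtain ⟨w₀, hw₀mem, hw₀ne⟩ := Submodule.exists_mem_ne_zero_of_ne_bot hNObot
    have hw₀neg : w₀ ⬝ᵥ S *ᵥ w₀ < 0 := hN w₀ hw₀mem.1 hw₀ne
    -- M ⊔ E is a proper subspace
    have hMEne : ¬ (O ≤ M ⊔ E) := by
      intro hle
      have htop : (⊤ : Submodule ℝ (ι → ℝ)) ≤ M ⊔ E := by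
        rw [← hMOsup]
        exact sup_le (le_sup_left) (le_trans hle (le_refl _))
      have h1 := Submodule.finrank_sup_add_finrank_inf_eq M E
      have h2 : finrank ℝ (⊤ : Submodule ℝ (ι → ℝ)) ≤ finrank ℝ ↥(M ⊔ E) :=
        Submodule.finrank_mono htop
      rw [finrank_top] at h2
      omega
    obtain ⟨u, huO, huME⟩ := SetLike.not_le_iff_exists.mp hMEne
    clear hMEne
    -- perturb w₀ to escape M ⊔ E
    obtain ⟨ε, hwneg, hwME⟩ := escape S hS (M ⊔ E) w₀ u hw₀neg huME
    set w : ι → ℝ := w₀ + ε • u with hwdef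
    have hwO : w ∈ O := O.add_mem hw₀mem.2 (O.smul_mem ε huO)
    have hwM : w ∉ M := fun h => hwME (Submodule.mem_sup_left h)
    have hwne : w ≠ 0 := by
      intro h
      rw [h] at hwneg
      simp at hwneg
    -- the new subspace
    have hworth : ∀ v ∈ M, v ⬝ᵥ S *ᵥ w = 0 := by
      intro v hv
      have := hwO v hv
      rwa [hBapp] at this
    obtain ⟨M₁, hM₁⟩ : ∃ T : Submodule ℝ (ι → ℝ), T = M ⊔ (ℝ ∙ w) := ⟨_, rfl⟩
    have hmemM₁ : ∀ v, v ∈ M₁ → ∃ u' ∈ M, ∃ c : ℝ, v = u' + c • w := by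
      intro v hv
      rw [hM₁] at hv
      obtain ⟨u', hu', y, hy, hsum⟩ := Submodule.mem_sup.mp hv
      obtain ⟨c, hc⟩ := Submodule.mem_span_singleton.mp hy
      exact ⟨u', hu', c, by rw [← hsum, ← hc]⟩
    have hM₁neg : ∀ v ∈ M₁, v ≠ 0 → v ⬝ᵥ S *ᵥ v < 0 := by
      intro v hv hvne
      obtain ⟨u', hu', c, rfl⟩ := hmemM₁ v hv
      rw [quad_expand S hS, hworth u' hu']
      rcases eq_or_ne c 0 with rfl | hc
      · have hu'ne : u' ≠ 0 := by simpa using hvne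
        have := hM u' hu' hu'ne
        simpa using this
      · have h1 : u' ⬝ᵥ S *ᵥ u' ≤ 0 := by
          rcases eq_or_ne u' 0 with rfl | h
          · simp
          · linarith [hM u' hu' h]
        have h2 : 0 < c ^ 2 := by positivity
        nlinarith
    have hM₁E : M₁ ⊓ E = ⊥ := by
      rw [Submodule.eq_bot_iff]
      rintro v ⟨hv1, hv2⟩
      obtain ⟨u', hu', c, rfl⟩ := hmemM₁ _ hv1
      rcases eq_or_ne c 0 with rfl | hc
      · have : u' ∈ M ⊓ E := ⟨hu', by simpa using hv2⟩
        rw [hME] at this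
        simpa using this
      · exfalso
        apply hwME
        have h1 : u' + c • w ∈ M ⊔ E := Submodule.mem_sup_right hv2
        have h2 : u' ∈ M ⊔ E := Submodule.mem_sup_left hu'
        have h3 : c • w ∈ M ⊔ E := by
          have := Submodule.sub_mem _ h1 h2
          simpa using this
        exact (Submodule.smul_mem_iff _ hc).mp h3
    have hM₁fin : finrank ℝ M₁ = finrank ℝ M + 1 := by
      have hint : M ⊓ (ℝ ∙ w) = ⊥ := by
        rw [Submodule.eq_bot_iff]
        rintro v ⟨hv1, hv2⟩
        obtain ⟨c, rfl⟩ := Submodule.mem_span_singleton.mp hv2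
        rcases eq_or_ne c 0 with rfl | hc
        · simp
        · exfalso
          exact hwM (by simpa [smul_smul, inv_mul_cancel₀ hc] using M.smul_mem c⁻¹ hv1)
      have h1 := Submodule.finrank_sup_add_finrank_inf_eq M (ℝ ∙ w)
      rw [hint, finrank_bot, finrank_span_singleton hwne] at h1
      rw [hM₁]
      omega
    obtain ⟨M', hle, hneg, hE, hfin⟩ := ih M₁ hM₁neg hM₁E (by omega)
    exact ⟨M', le_trans (hM₁ ▸ le_sup_left) hle, hneg, hE, hfin⟩

end Core

/-- A symmetric matrix `S` (indexed by `ι`) has at least `k` negative eigenvalues: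
there is a subspace of dimension at least `k` on which the quadratic form is
negative definite. -/
def HasAtLeastNegEigenvalues {ι : Type*} [Fintype ι] (S : Matrix ι ι ℝ) (k : ℕ) : Prop :=
  ∃ W : Submodule ℝ (ι → ℝ), k ≤ Module.finrank ℝ W ∧
    ∀ v ∈ W, v ≠ 0 → v ⬝ᵥ S *ᵥ v < 0

/-- Elimination lemma (Helmersson 1999, Theorem 2; Lemma 3 of the paper). -/
theorem elimination_lemma {l k m n r : ℕ}
    (P : Matrix (Fin l) (Fin l) ℝ) (hP : P.IsSymm)
    (W : Matrix (Fin l) (Fin k) ℝ) (U : Matrix (Fin l) (Fin m) ℝ)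
    (V : Matrix (Fin n) (Fin k) ℝ) (Vperp : Matrix (Fin k) (Fin r) ℝ)
    (hbasis : LinearMap.range Vperp.mulVecLin = LinearMap.ker V.mulVecLin)
    (hinj : Function.Injective Vperp.mulVecLin) :
    (∃ K : Matrix (Fin m) (Fin n) ℝ,
        (-((W + U * K * V)ᵀ * P * (W + U * K * V))).PosDef) ↔
      (-((W * Vperp)ᵀ * P * (W * Vperp))).PosDef ∧
        HasAtLeastNegEigenvalues ((fromCols W U)ᵀ * P * fromCols W U) k := by
  classical
  have hFk : finrank ℝ (Fin k → ℝ) = k := by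
    rw [Module.finrank_fintype_fun_eq_card, Fintype.card_fin]
  have hFr : finrank ℝ (Fin r → ℝ) = r := by
    rw [Module.finrank_fintype_fun_eq_card, Fintype.card_fin]
  constructor
  · rintro ⟨K, hK⟩
    constructor
    · apply posDef_neg_of P hP
      intro c hc
      have hx : Vperp *ᵥ c ≠ 0 := by
        intro h
        apply hc
        apply hinj
        simpa [Matrix.mulVecLin_apply] using h
      have hVx : V *ᵥ (Vperp *ᵥ c) = 0 := by
        have hmem : Vperp.mulVecLin c ∈ LinearMap.range Vperp.mulVecLin :=
          ⟨c, rfl⟩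
        rw [hbasis, LinearMap.mem_ker] at hmem
        simpa [Matrix.mulVecLin_apply] using hmem
      have hmv : (W * Vperp) *ᵥ c = (W + U * K * V) *ᵥ (Vperp *ᵥ c) := by
        rw [add_mulVec, ← mulVec_mulVec (Vperp *ᵥ c) (U * K) V, hVx, mulVec_zero,
          add_zero, mulVec_mulVec]
      rw [hmv]
      exact neg_quad_of_posDef P _ hK _ hx
    · let G : (Fin k → ℝ) →ₗ[ℝ] (Fin k ⊕ Fin m → ℝ) :=
        { toFun := fun x => Sum.elim x ((K * V) *ᵥ x)
          map_add' := by
            intro x y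
            funext i
            cases i <;> simp [mulVec_add]
          map_smul' := by
            intro a x
            funext i
            cases i <;> simp [mulVec_smul] }
      have hGinj : Function.Injective G := by
        intro x y h
        funext i
        exact congrFun h (Sum.inl i)
      refine ⟨LinearMap.range G, ?_, ?_⟩
      · rw [LinearMap.finrank_range_of_inj hGinj, hFk]
      · rintro v ⟨x, rfl⟩ hne
        have hx0 : x ≠ 0 := by
          intro h
          apply hne
          rw [h, map_zero]
        have hGx : G x = Sum.elim x ((K * V) *ᵥ x) := rfl
        rw [hGx, quad_eq]
        have hmv : fromCols W U *ᵥ (Sum.elim x ((K * V) *ᵥ x)) =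
            (W + U * K * V) *ᵥ x := by
          rw [fromCols_mulVec_sumElim, add_mulVec, mulVec_mulVec, ← Matrix.mul_assoc]
        rw [hmv]
        exact neg_quad_of_posDef P _ hK x hx0
  · rintro ⟨h1, N, hNk, hNneg⟩
    set F : Matrix (Fin l) (Fin k ⊕ Fin m) ℝ := fromCols W U with hF
    set S : Matrix (Fin k ⊕ Fin m) (Fin k ⊕ Fin m) ℝ := Fᵀ * P * F with hSS
    have hSsymm : S.IsSymm := by
      show Sᵀ = S
      rw [hSS, transpose_mul, transpose_mul, transpose_transpose, hP.eq, Matrix.mul_assoc]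
    -- the coordinate projection and its kernel
    set π₁ : (Fin k ⊕ Fin m → ℝ) →ₗ[ℝ] (Fin k → ℝ) :=
      LinearMap.funLeft ℝ ℝ (Sum.inl : Fin k → Fin k ⊕ Fin m) with hπ₁
    set E : Submodule ℝ (Fin k ⊕ Fin m → ℝ) := LinearMap.ker π₁ with hE
    have hπ₁app : ∀ (v : Fin k ⊕ Fin m → ℝ) (i : Fin k), π₁ v i = v (Sum.inl i) :=
      fun v i => rfl
    have hcard : finrank ℝ (Fin k ⊕ Fin m → ℝ) = k + m := by
      rw [Module.finrank_fintype_fun_eq_card, Fintype.card_sum, Fintype.card_fin,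
        Fintype.card_fin]
    have hπ₁surj : Function.Surjective π₁ :=
      LinearMap.funLeft_surjective_of_injective ℝ ℝ _ Sum.inl_injective
    have hEfin : finrank ℝ E = m := by
      have h2 := LinearMap.finrank_range_add_finrank_ker π₁
      rw [LinearMap.range_eq_top.mpr hπ₁surj, finrank_top, hFk, hcard, ← hE] at h2
      omega
    -- the subspace coming from the kernel of V
    let J : (Fin r → ℝ) →ₗ[ℝ] (Fin k ⊕ Fin m → ℝ) :=
      { toFun := fun c => Sum.elim (Vperp *ᵥ c) 0
        map_add' := by
          intro x y
          funext i
          cases i <;> simp [mulVec_add]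
        map_smul' := by
          intro a x
          funext i
          cases i <;> simp [mulVec_smul] }
    have hJapp : ∀ c, J c = Sum.elim (Vperp *ᵥ c) 0 := fun c => rfl
    have hJinj : Function.Injective J := by
      intro c₁ c₂ h
      apply hinj
      show Vperp.mulVecLin c₁ = Vperp.mulVecLin c₂
      simp only [Matrix.mulVecLin_apply]
      funext i
      exact congrFun h (Sum.inl i)
    set K₀ : Submodule ℝ (Fin k ⊕ Fin m → ℝ) := LinearMap.range J with hK₀
    have hK₀fin : finrank ℝ K₀ = r := by
      rw [hK₀, LinearMap.finrank_range_of_inj hJinj, hFr]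
    have hrk : r ≤ k := by
      have h2 : finrank ℝ (LinearMap.range Vperp.mulVecLin) = r := by
        rw [LinearMap.finrank_range_of_inj hinj, hFr]
      rw [hbasis] at h2
      have h3 := Submodule.finrank_le (LinearMap.ker V.mulVecLin)
      rw [hFk] at h3
      omega
    have hK₀neg : ∀ v ∈ K₀, v ≠ 0 → v ⬝ᵥ S *ᵥ v < 0 := by
      rintro v ⟨c, rfl⟩ hne
      have hc : c ≠ 0 := by
        intro h
        apply hne
        rw [h, map_zero]
      rw [hSS, quad_eq]
      have hmv : F *ᵥ (J c) = (W * Vperp) *ᵥ c := by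
        rw [hJapp, hF, fromCols_mulVec_sumElim, mulVec_zero, add_zero, mulVec_mulVec]
      rw [hmv]
      exact neg_quad_of_posDef P _ h1 c hc
    have hK₀E : K₀ ⊓ E = ⊥ := by
      rw [Submodule.eq_bot_iff]
      rintro v ⟨hv1, hv2⟩
      obtain ⟨c, rfl⟩ := hv1
      have hv2' : π₁ (J c) = 0 := hv2
      have hVc : Vperp *ᵥ c = 0 := by
        funext i
        have := congrFun hv2' i
        rw [hπ₁app] at this
        simpa [hJapp] using this
      rw [hJapp, hVc]
      funext i
      cases i <;> simp
    -- extend K₀ to a k-dimensional negative subspace transverse to E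
    have hEk : finrank ℝ E + k ≤ Fintype.card (Fin k ⊕ Fin m) := by
      rw [hEfin, Fintype.card_sum, Fintype.card_fin, Fintype.card_fin]
      omega
    obtain ⟨M, hK₀M, hMneg, hME, hMfin⟩ :=
      extend_neg S hSsymm E N k hNneg hNk hEk (k - r) K₀ hK₀neg hK₀E (by omega)
    -- M is the graph of a linear map L : ℝ^k → ℝ^m
    have hπ₁Minj : Function.Injective (π₁.comp M.subtype) := by
      rw [← LinearMap.ker_eq_bot]
      rw [Submodule.eq_bot_iff]
      intro x hx
      rw [LinearMap.mem_ker, LinearMap.comp_apply] at hx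
      have hxE : (x : Fin k ⊕ Fin m → ℝ) ∈ E := by
        rw [hE, LinearMap.mem_ker]; exact hx
      have : (x : Fin k ⊕ Fin m → ℝ) ∈ M ⊓ E := ⟨x.2, hxE⟩
      rw [hME] at this
      exact Subtype.ext (by simpa using this)
    have hdim : finrank ℝ M = finrank ℝ (Fin k → ℝ) := by rw [hMfin, hFk]
    set e := LinearMap.linearEquivOfInjective (π₁.comp M.subtype) hπ₁Minj hdim with he
    set L : (Fin k → ℝ) →ₗ[ℝ] (Fin m → ℝ) :=
      (LinearMap.funLeft ℝ ℝ (Sum.inr : Fin m → Fin k ⊕ Fin m)).comp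
        (M.subtype.comp e.symm.toLinearMap) with hL
    have hLapp : ∀ (x : Fin k → ℝ) (j : Fin m),
        L x j = ((e.symm x : M) : Fin k ⊕ Fin m → ℝ) (Sum.inr j) := fun x j => rfl
    have hgraphmem : ∀ x : Fin k → ℝ, Sum.elim x (L x) ∈ M := by
      intro x
      have h2 : π₁ ((e.symm x : M) : Fin k ⊕ Fin m → ℝ) = x := by
        have h3 := e.apply_symm_apply x
        rw [he, LinearMap.linearEquivOfInjective_apply] at h3
        exact h3
      have h3 : Sum.elim x (L x) = ((e.symm x : M) : Fin k ⊕ Fin m → ℝ) := by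
        funext i
        cases i with
        | inl i =>
          have := congrFun h2 i
          rw [hπ₁app] at this
          simpa using this.symm
        | inr j => exact hLapp x j
      rw [h3]
      exact (e.symm x).2
    have huniq : ∀ x y, Sum.elim x y ∈ M → y = L x := by
      intro x y hxy
      have h2 := hgraphmem x
      have h3 : Sum.elim x y - Sum.elim x (L x) ∈ M := M.sub_mem hxy h2
      have h4 : Sum.elim x y - Sum.elim x (L x) ∈ E := by
        rw [hE, LinearMap.mem_ker]
        funext i
        rw [hπ₁app]
        simp
      have h5 : Sum.elim x y - Sum.elim x (L x) = 0 := by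
        have h6 : Sum.elim x y - Sum.elim x (L x) ∈ M ⊓ E := ⟨h3, h4⟩
        rw [hME] at h6
        simpa using h6
      funext j
      have := congrFun h5 (Sum.inr j)
      simpa [sub_eq_zero] using this
    have hL0 : ∀ x : Fin k → ℝ, V *ᵥ x = 0 → L x = 0 := by
      intro x hx
      have hmem : x ∈ LinearMap.range Vperp.mulVecLin := by
        rw [hbasis, LinearMap.mem_ker]
        show V *ᵥ x = 0
        exact hx
      obtain ⟨c, rfl⟩ := hmem
      have hmemM : Sum.elim (Vperp.mulVecLin c) (0 : Fin m → ℝ) ∈ M := by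
        apply hK₀M
        exact ⟨c, rfl⟩
      exact (huniq _ 0 hmemM).symm
    -- factor L through V
    have hkerL : LinearMap.ker V.mulVecLin ≤ LinearMap.ker L := by
      intro x hx
      rw [LinearMap.mem_ker] at hx ⊢
      exact hL0 x hx
    obtain ⟨K', hK'⟩ := LinearMap.exists_extend
      ((Submodule.liftQ (LinearMap.ker V.mulVecLin) L hkerL).comp
        (V.mulVecLin.quotKerEquivRange.symm.toLinearMap))
    have hK'f : ∀ x, K' (V.mulVecLin x) = L x := by
      intro x
      have h2 : K' (V.mulVecLin x) =
          (K'.comp (LinearMap.range V.mulVecLin).subtype)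
            ⟨V.mulVecLin x, LinearMap.mem_range_self _ x⟩ := rfl
      rw [h2, hK']
      simp only [LinearMap.comp_apply, LinearEquiv.coe_toLinearMap]
      rw [LinearMap.quotKerEquivRange_symm_apply_image]
      rw [Submodule.mkQ_apply, Submodule.liftQ_apply]
    refine ⟨LinearMap.toMatrix' K', posDef_neg_of P hP _ ?_⟩
    intro x hx
    have hKV : (LinearMap.toMatrix' K' * V) *ᵥ x = L x := by
      rw [← mulVec_mulVec x (LinearMap.toMatrix' K') V]
      have h2 : (LinearMap.toMatrix' K') *ᵥ (V *ᵥ x) = K' (V *ᵥ x) := by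
        rw [← Matrix.toLin'_apply, Matrix.toLin'_toMatrix']
      rw [h2]
      exact hK'f x
    have hv : Sum.elim x (L x) ∈ M := hgraphmem x
    have hvne : Sum.elim x (L x) ≠ 0 := by
      intro h
      apply hx
      funext i
      exact congrFun h (Sum.inl i)
    have hneg := hMneg _ hv hvne
    rw [hSS, quad_eq] at hneg
    have hmv : F *ᵥ (Sum.elim x (L x)) = (W + U * (LinearMap.toMatrix' K') * V) *ᵥ x := by
      rw [hF, fromCols_mulVec_sumElim, add_mulVec, ← hKV, mulVec_mulVec,
        ← Matrix.mul_assoc]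
    rw [hmv] at hneg
    exact hneg
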